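/- Let G be a connected graph whose cycle space is spanned as follows: C is a cycle in G and P′ is a path between two adjacent vertices v_1, v_c of C internally disjoint from C, with V(G) = V(C) ∪ V(P′), such that every vertex of C − {v_1, v_c} has exactly one neighbor outside C, this neighbor being one of the two ends u_1, u_ℓ of the path P′ − {v_1,v_c} (alternating with parity along C). Then G has a path-decomposition with maximum bag size at most max{|V(C)| + 1, 3}. -/

import Mathlib

open SimpleGraph

/-- A tree-decomposition of the graph `G` over the tree `τ` with bags `X`. -/
structure IsTreeDecomp {V : Type} {T : Type} (G : SimpleGraph V) (τ : SimpleGraph T)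
    (X : T → Set V) : Prop where
  isTree : τ.IsTree
  coverV : ∀ v : V, ∃ t, v ∈ X t
  coverE : ∀ ⦃u v : V⦄, G.Adj u v → ∃ t, u ∈ X t ∧ v ∈ X t
  subtreeConn : ∀ v : V, (τ.induce {t | v ∈ X t}).Connected

/-- The graph `G` has tree-width at most `w`. -/
def TreewidthAtMost {V : Type} (G : SimpleGraph V) (w : ℤ) : Prop :=
  ∃ (T : Type) (τ : SimpleGraph T) (X : T → Set V),
    IsTreeDecomp G τ X ∧ ∀ t, ((X t).ncard : ℤ) ≤ w + 1

/-- `H` is a minor of `G`: there is a family of nonempty, pairwise disjoint, connected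
branch sets in `G`, one for each vertex of `H`, with edges of `H` realized by edges of `G`. -/
def IsMinorOf {W V : Type} (H : SimpleGraph W) (G : SimpleGraph V) : Prop :=
  ∃ f : W → Set V, (∀ w, (f w).Nonempty) ∧ (∀ w, (G.induce (f w)).Connected) ∧
    (Pairwise fun w₁ w₂ => Disjoint (f w₁) (f w₂)) ∧
    ∀ ⦃w₁ w₂⦄, H.Adj w₁ w₂ → ∃ u ∈ f w₁, ∃ x ∈ f w₂, G.Adj u x

/-- `F⁺`: the graph obtained from `F` by adding a new apex vertex adjacent to all of `F`. -/
def addApex {α : Type} (F : SimpleGraph α) : SimpleGraph (Option α) :=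
  SimpleGraph.fromRel (fun a b => (a = none ∧ b ≠ none) ∨
    ∃ x y, a = some x ∧ b = some y ∧ F.Adj x y)

/-- The neighbourhood `N_G(X)` of a vertex set `X`. -/
def nbhd {V : Type} (G : SimpleGraph V) (X : Set V) : Set V :=
  {v | v ∉ X ∧ ∃ u ∈ X, G.Adj u v}

/-- a connected graph consisting of a cycle `v 0, …, v (c−1)` together with
an attached induced path `u 0, …, u (ℓ−1)` joining the two adjacent cycle vertices
`v 0` and `v (c−1)`, in which each cycle vertex has exactly one neighbour outside the
cycle, namely `u 0` for even-indexed and `u (ℓ−1)` for odd-indexed cycle vertices, has a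
path-decomposition with maximum bag size at most `max {c + 1, 3}`. -/

lemma pg_no_cross (m : ℕ) (x y : Fin m) (h : (x : ℕ) + 1 = (y : ℕ)) :
    ¬ ((pathGraph m) \ fromEdgeSet {s(x, y)}).Reachable x y := by
  rintro ⟨p⟩
  obtain ⟨d, hd, hdS, hdS'⟩ := p.exists_boundary_dart {t : Fin m | (t : ℕ) ≤ (x : ℕ)}
    (by simp) (by simp; omega)
  have hadj := d.adj
  rw [sdiff_adj] at hadj
  obtain ⟨h1, h2⟩ := hadj
  rw [pathGraph_adj] at h1
  simp only [Set.mem_setOf_eq, not_le] at hdS hdS'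
  have hfst : (d.fst : ℕ) = (x : ℕ) := by omega
  have hsnd : (d.snd : ℕ) = (y : ℕ) := by omega
  apply h2
  rw [fromEdgeSet_adj]
  have e1 : d.fst = x := Fin.ext hfst
  have e2 : d.snd = y := Fin.ext hsnd
  refine ⟨by rw [e1, e2]; rfl, ?_⟩
  rw [e1, e2]; intro hxy; omega

lemma pg_isAcyclic (m : ℕ) : (pathGraph m).IsAcyclic := by
  rw [isAcyclic_iff_forall_adj_isBridge]
  intro x y hxy
  rw [isBridge_iff]
  rcases pathGraph_adj.mp hxy with h | h
  · exact pg_no_cross m x y h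
  · intro hr
    apply pg_no_cross m y x h
    rw [show s(y, x) = s(x, y) from Sym2.eq_swap]
    exact hr.symm

lemma pg_isTree (m : ℕ) (hm : 1 ≤ m) : (pathGraph m).IsTree := by
  obtain ⟨k, rfl⟩ : ∃ k, m = k + 1 := ⟨m - 1, by omega⟩
  exact ⟨pathGraph_connected k, pg_isAcyclic _⟩

lemma interval_conn (m a b : ℕ) (hab : a ≤ b) (hb : b < m) :
    ((pathGraph m).induce {t : Fin m | a ≤ (t : ℕ) ∧ (t : ℕ) ≤ b}).Connected := by
  set S : Set (Fin m) := {t : Fin m | a ≤ (t : ℕ) ∧ (t : ℕ) ≤ b} with hS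
  have hz : (⟨b, hb⟩ : Fin m) ∈ S := ⟨hab, le_refl b⟩
  have hmem : ∀ (xv : ℕ) (hxm : xv < m), a ≤ xv → xv ≤ b → (⟨xv, hxm⟩ : Fin m) ∈ S :=
    fun xv hxm h1 h2 => ⟨h1, h2⟩
  have key : ∀ (k xv : ℕ) (hxm : xv < m) (h1 : a ≤ xv) (h2 : xv ≤ b), b - xv ≤ k →
      ((pathGraph m).induce S).Reachable ⟨⟨xv, hxm⟩, hmem xv hxm h1 h2⟩ ⟨⟨b, hb⟩, hz⟩ := by
    intro k
    induction k with
    | zero =>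
      intro xv hxm h1 h2 hx
      have hxb : xv = b := by omega
      subst hxb
      rfl
    | succ n ih =>
      intro xv hxm h1 h2 hx
      by_cases hxb : xv = b
      · subst hxb; rfl
      · have hadj : ((pathGraph m).induce S).Adj ⟨⟨xv, hxm⟩, hmem xv hxm h1 h2⟩
            ⟨⟨xv + 1, by omega⟩, hmem (xv+1) (by omega) (by omega) (by omega)⟩ := by
          simp only [comap_adj, Function.Embedding.coe_subtype, pathGraph_adj]
          exact Or.inl trivial
        exact hadj.reachable.trans (ih (xv+1) (by omega) (by omega) (by omega) (by omega))
  have hne : Nonempty S := ⟨⟨⟨b, hb⟩, hz⟩⟩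
  refine ⟨fun x y => ?_⟩
  obtain ⟨⟨xv, hxm⟩, hx1, hx2⟩ := x
  obtain ⟨⟨yv, hym⟩, hy1, hy2⟩ := y
  exact (key b xv hxm hx1 hx2 (by omega)).trans (key b yv hym hy1 hy2 (by omega)).symm

theorem stmt13 {V : Type} [Fintype V] (G : SimpleGraph V) (hconn : G.Connected)
    (c ℓ : ℕ) (hc : 3 ≤ c) (hl : 1 ≤ ℓ)
    (v : Fin c → V) (u : Fin ℓ → V)
    (hvinj : Function.Injective v) (huinj : Function.Injective u)
    (hdisj : ∀ i j, v i ≠ u j)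
    (hcover : ∀ x : V, (∃ i, x = v i) ∨ ∃ j, x = u j)
    (hcyc : ∀ (i : ℕ) (h : i < c),
      G.Adj (v ⟨i, h⟩) (v ⟨(i + 1) % c, Nat.mod_lt _ (by omega)⟩))
    (hpath : ∀ (j : ℕ) (h : j + 1 < ℓ), G.Adj (u ⟨j, by omega⟩) (u ⟨j + 1, h⟩))
    (hv1u1 : G.Adj (v ⟨0, by omega⟩) (u ⟨0, by omega⟩))
    (hvcul : G.Adj (v ⟨c - 1, by omega⟩) (u ⟨ℓ - 1, by omega⟩))
    (hparity : ∀ (i : Fin c) (x : V), (∀ i', x ≠ v i') → G.Adj (v i) x →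
      x = if (i : ℕ) % 2 = 0 then u ⟨0, by omega⟩ else u ⟨ℓ - 1, by omega⟩)
    (hinduced : ∀ (j j' : ℕ) (hj : j < ℓ) (hj' : j' < ℓ),
      G.Adj (u ⟨j, hj⟩) (u ⟨j', hj'⟩) → j' = j + 1 ∨ j = j' + 1) :
    ∃ (m : ℕ) (X : Fin m → Set V),
      IsTreeDecomp G (pathGraph m) X ∧ ∀ t, (X t).ncard ≤ max (c + 1) 3 := by
  classical
  have hl0 : 0 < ℓ := hl
  have hl1 : ℓ - 1 < ℓ := by omega
  have humk : ∀ (a b : ℕ) (ha : a < ℓ) (hb : b < ℓ), u ⟨a, ha⟩ = u ⟨b, hb⟩ ↔ a = b := by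
    intro a b ha hb
    constructor
    · intro h
      have := huinj h
      exact congrArg Fin.val this
    · rintro rfl; rfl
  have hrange_v : (Set.range v).ncard = c := by
    rw [← Set.image_univ, Set.ncard_image_of_injective _ hvinj, Set.ncard_univ,
      Nat.card_eq_fintype_card, Fintype.card_fin]
  by_cases hℓ2 : ℓ < 2
  · -- ℓ = 1
    have hℓ : ℓ = 1 := by omega
    refine ⟨1, fun _ => Set.univ, ⟨pg_isTree 1 (by omega), fun x => ⟨0, trivial⟩,
      fun x y _ => ⟨0, trivial, trivial⟩, fun w => ?_⟩, fun t => ?_⟩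
    · have hset : {t : Fin 1 | w ∈ (fun _ : Fin 1 => (Set.univ : Set V)) t}
          = {t : Fin 1 | 0 ≤ (t : ℕ) ∧ (t : ℕ) ≤ 0} := by
        ext t
        have := t.isLt
        simp only [Set.mem_setOf_eq, Set.mem_univ, true_iff]
        omega
      rw [hset]
      exact interval_conn 1 0 0 le_rfl (by omega)
    · have hsub : (Set.univ : Set V) ⊆ Set.range v ∪ Set.range u := by
        intro x _
        rcases hcover x with ⟨i, rfl⟩ | ⟨j, rfl⟩
        · exact Or.inl ⟨i, rfl⟩
        · exact Or.inr ⟨j, rfl⟩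
      have hru : (Set.range u).ncard = ℓ := by
        rw [← Set.image_univ, Set.ncard_image_of_injective _ huinj, Set.ncard_univ,
          Nat.card_eq_fintype_card, Fintype.card_fin]
      calc (Set.univ : Set V).ncard ≤ (Set.range v ∪ Set.range u).ncard :=
            Set.ncard_le_ncard hsub (Set.toFinite _)
        _ ≤ (Set.range v).ncard + (Set.range u).ncard := Set.ncard_union_le _ _
        _ = c + 1 := by rw [hrange_v, hru, hℓ]
        _ ≤ max (c + 1) 3 := le_max_left _ _
  · push_neg at hℓ2
    have hmin2 : ∀ t : Fin (ℓ+1), min ((t : ℕ) - 2) (ℓ - 1) < ℓ := fun t => by omega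
    have hmin1 : ∀ t : Fin (ℓ+1), min ((t : ℕ) - 1) (ℓ - 1) < ℓ := fun t => by omega
    set X : Fin (ℓ+1) → Set V := fun t =>
      if (t : ℕ) = 0 then Set.range v ∪ {u ⟨0, hl0⟩}
      else if (t : ℕ) = 1 then
        (v '' {i : Fin c | (i : ℕ) % 2 = 1}) ∪ {u ⟨0, hl0⟩, u ⟨ℓ - 1, hl1⟩}
      else {u ⟨min ((t : ℕ) - 2) (ℓ - 1), hmin2 t⟩, u ⟨min ((t : ℕ) - 1) (ℓ - 1), hmin1 t⟩,
        u ⟨ℓ - 1, hl1⟩} with hX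
    have hXt0 : ∀ t : Fin (ℓ+1), (t : ℕ) = 0 →
        X t = Set.range v ∪ {u ⟨0, hl0⟩} := by
      intro t ht; simp only [hX]; rw [if_pos ht]
    have hXt1 : ∀ t : Fin (ℓ+1), (t : ℕ) = 1 →
        X t = (v '' {i : Fin c | (i : ℕ) % 2 = 1}) ∪ {u ⟨0, hl0⟩, u ⟨ℓ - 1, hl1⟩} := by
      intro t ht; simp only [hX]
      rw [if_neg (by omega), if_pos ht]
    have hXt2 : ∀ t : Fin (ℓ+1), 2 ≤ (t : ℕ) →
        X t = {u ⟨min ((t : ℕ) - 2) (ℓ - 1), hmin2 t⟩, u ⟨min ((t : ℕ) - 1) (ℓ - 1), hmin1 t⟩,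
          u ⟨ℓ - 1, hl1⟩} := by
      intro t ht; simp only [hX]
      rw [if_neg (by omega), if_neg (by omega)]
    refine ⟨ℓ + 1, X, ⟨pg_isTree (ℓ+1) (by omega), ?_, ?_, ?_⟩, ?_⟩
    · -- coverV
      intro x
      rcases hcover x with ⟨i, rfl⟩ | ⟨j, rfl⟩
      · exact ⟨⟨0, by omega⟩, by rw [hXt0 ⟨0, by omega⟩ rfl]; exact Or.inl ⟨i, rfl⟩⟩
      · obtain ⟨jv, hj⟩ := j
        by_cases hjl : jv = ℓ - 1
        · refine ⟨⟨1, by omega⟩, ?_⟩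
          rw [hXt1 ⟨1, by omega⟩ rfl]
          right; right
          exact (humk _ _ _ _).mpr hjl
        · refine ⟨⟨jv + 2, by omega⟩, ?_⟩
          rw [hXt2 ⟨jv + 2, by omega⟩ (by simp)]
          left
          exact ((humk _ _ _ _).mpr (by simp; omega)).symm
    · -- coverE
      intro x y hxy
      rcases hcover x with ⟨i, rfl⟩ | ⟨j, rfl⟩ <;> rcases hcover y with ⟨i', rfl⟩ | ⟨j', rfl⟩
      · refine ⟨⟨0, by omega⟩, ?_⟩
        rw [hXt0 ⟨0, by omega⟩ rfl]
        exact ⟨Or.inl ⟨i, rfl⟩, Or.inl ⟨i', rfl⟩⟩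
      · -- v i -- u j'
        have hpar := hparity i (u j') (fun i' => (hdisj i' j').symm) hxy
        by_cases hev : (i : ℕ) % 2 = 0
        · rw [if_pos hev] at hpar
          refine ⟨⟨0, by omega⟩, ?_⟩
          rw [hXt0 ⟨0, by omega⟩ rfl]
          exact ⟨Or.inl ⟨i, rfl⟩, Or.inr (by rw [hpar]; rfl)⟩
        · rw [if_neg hev] at hpar
          refine ⟨⟨1, by omega⟩, ?_⟩
          rw [hXt1 ⟨1, by omega⟩ rfl]
          refine ⟨Or.inl ⟨i, show (i : ℕ) % 2 = 1 by omega, rfl⟩, Or.inr (Or.inr ?_)⟩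
          rw [hpar]; exact rfl
      · -- u j -- v i'
        have hpar := hparity i' (u j) (fun i'' => (hdisj i'' j).symm) hxy.symm
        by_cases hev : (i' : ℕ) % 2 = 0
        · rw [if_pos hev] at hpar
          refine ⟨⟨0, by omega⟩, ?_⟩
          rw [hXt0 ⟨0, by omega⟩ rfl]
          exact ⟨Or.inr (by rw [hpar]; rfl), Or.inl ⟨i', rfl⟩⟩
        · rw [if_neg hev] at hpar
          refine ⟨⟨1, by omega⟩, ?_⟩
          rw [hXt1 ⟨1, by omega⟩ rfl]
          refine ⟨Or.inr (Or.inr ?_), Or.inl ⟨i', show (i' : ℕ) % 2 = 1 by omega, rfl⟩⟩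
          rw [hpar]; exact rfl
      · -- u j -- u j'
        obtain ⟨jv, hjv⟩ := j
        obtain ⟨jv', hjv'⟩ := j'
        rcases hinduced jv jv' hjv hjv' hxy with h | h
        · refine ⟨⟨jv + 2, by omega⟩, ?_⟩
          rw [hXt2 ⟨jv + 2, by omega⟩ (by simp)]
          constructor
          · exact Or.inl (((humk _ _ _ _).mpr (by simp; omega)).symm)
          · exact Or.inr (Or.inl (((humk _ _ _ _).mpr (by simp; omega)).symm))
        · refine ⟨⟨jv' + 2, by omega⟩, ?_⟩
          rw [hXt2 ⟨jv' + 2, by omega⟩ (by simp)]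
          constructor
          · exact Or.inr (Or.inl (((humk _ _ _ _).mpr (by simp; omega)).symm))
          · exact Or.inl (((humk _ _ _ _).mpr (by simp; omega)).symm)
    · -- subtreeConn
      intro w
      rcases hcover w with ⟨i, rfl⟩ | ⟨j, rfl⟩
      · by_cases hev : (i : ℕ) % 2 = 0
        · -- even: only bag 0
          have hset : {t : Fin (ℓ+1) | v i ∈ X t}
              = {t : Fin (ℓ+1) | 0 ≤ (t : ℕ) ∧ (t : ℕ) ≤ 0} := by
            ext t
            simp only [Set.mem_setOf_eq]
            constructor
            · intro hm
              by_cases h0 : (t : ℕ) = 0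
              · omega
              · by_cases h1 : (t : ℕ) = 1
                · rw [hXt1 t h1] at hm
                  simp only [Set.mem_union, Set.mem_image, Set.mem_setOf_eq,
                    Set.mem_insert_iff, Set.mem_singleton_iff] at hm
                  rcases hm with ⟨i', hi', hve⟩ | hm | hm
                  · have := hvinj hve
                    subst this
                    omega
                  · exact absurd hm (hdisj _ _)
                  · exact absurd hm (hdisj _ _)
                · rw [hXt2 t (by omega)] at hm
                  simp only [Set.mem_insert_iff, Set.mem_singleton_iff] at hm
                  rcases hm with hm | hm | hm <;> exact absurd hm (hdisj _ _)
            · intro hm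
              have h0 : (t : ℕ) = 0 := by omega
              rw [hXt0 t h0]
              exact Or.inl ⟨i, rfl⟩
          rw [hset]
          exact interval_conn (ℓ+1) 0 0 le_rfl (by omega)
        · -- odd: bags 0 and 1
          have hset : {t : Fin (ℓ+1) | v i ∈ X t}
              = {t : Fin (ℓ+1) | 0 ≤ (t : ℕ) ∧ (t : ℕ) ≤ 1} := by
            ext t
            simp only [Set.mem_setOf_eq]
            constructor
            · intro hm
              by_cases h0 : (t : ℕ) = 0
              · omega
              · by_cases h1 : (t : ℕ) = 1
                · omega
                · rw [hXt2 t (by omega)] at hm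
                  simp only [Set.mem_insert_iff, Set.mem_singleton_iff] at hm
                  rcases hm with hm | hm | hm <;> exact absurd hm (hdisj _ _)
            · intro hm
              by_cases h0 : (t : ℕ) = 0
              · rw [hXt0 t h0]; exact Or.inl ⟨i, rfl⟩
              · have h1 : (t : ℕ) = 1 := by omega
                rw [hXt1 t h1]
                exact Or.inl ⟨i, show (i : ℕ) % 2 = 1 by omega, rfl⟩
          rw [hset]
          exact interval_conn (ℓ+1) 0 1 (by omega) (by omega)
      · obtain ⟨jv, hj⟩ := j
        by_cases hj0 : jv = 0
        · subst hj0
          have hset : {t : Fin (ℓ+1) | u ⟨0, hj⟩ ∈ X t}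
              = {t : Fin (ℓ+1) | 0 ≤ (t : ℕ) ∧ (t : ℕ) ≤ 2} := by
            ext t
            simp only [Set.mem_setOf_eq]
            constructor
            · intro hm
              by_cases h0 : (t : ℕ) = 0
              · omega
              · by_cases h1 : (t : ℕ) = 1
                · omega
                · rw [hXt2 t (by omega)] at hm
                  have ht := t.isLt
                  simp only [Set.mem_insert_iff, Set.mem_singleton_iff] at hm
                  rcases hm with hm | hm | hm <;> rw [humk _ _ _ _] at hm <;> omega
            · intro hm
              by_cases h0 : (t : ℕ) = 0
              · rw [hXt0 t h0]
                exact Or.inr rfl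
              · by_cases h1 : (t : ℕ) = 1
                · rw [hXt1 t h1]
                  exact Or.inr (Or.inl rfl)
                · rw [hXt2 t (by omega)]
                  have h2 : (t : ℕ) = 2 := by omega
                  exact Or.inl ((humk _ _ _ _).mpr (by omega)).symm
          rw [hset]
          exact interval_conn (ℓ+1) 0 2 (by omega) (by omega)
        · by_cases hjl : jv = ℓ - 1
          · have hset : {t : Fin (ℓ+1) | u ⟨jv, hj⟩ ∈ X t}
                = {t : Fin (ℓ+1) | 1 ≤ (t : ℕ) ∧ (t : ℕ) ≤ ℓ} := by
              ext t
              simp only [Set.mem_setOf_eq]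
              have ht := t.isLt
              constructor
              · intro hm
                by_cases h0 : (t : ℕ) = 0
                · rw [hXt0 t h0] at hm
                  simp only [Set.mem_union, Set.mem_range, Set.mem_singleton_iff] at hm
                  rcases hm with ⟨i', hi'⟩ | hm
                  · exact absurd hi' (hdisj _ _)
                  · rw [humk _ _ _ _] at hm
                    omega
                · omega
              · intro hm
                by_cases h1 : (t : ℕ) = 1
                · rw [hXt1 t h1]
                  exact Or.inr (Or.inr ((humk _ _ _ _).mpr hjl))
                · rw [hXt2 t (by omega)]
                  exact Or.inr (Or.inr ((humk _ _ _ _).mpr hjl))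
            rw [hset]
            exact interval_conn (ℓ+1) 1 ℓ (by omega) (by omega)
          · -- middle vertex: bags jv+1, jv+2
            have hset : {t : Fin (ℓ+1) | u ⟨jv, hj⟩ ∈ X t}
                = {t : Fin (ℓ+1) | jv + 1 ≤ (t : ℕ) ∧ (t : ℕ) ≤ jv + 2} := by
              ext t
              simp only [Set.mem_setOf_eq]
              have ht := t.isLt
              constructor
              · intro hm
                by_cases h0 : (t : ℕ) = 0
                · rw [hXt0 t h0] at hm
                  simp only [Set.mem_union, Set.mem_range, Set.mem_singleton_iff] at hm
                  rcases hm with ⟨i', hi'⟩ | hm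
                  · exact absurd hi' (hdisj _ _)
                  · rw [humk _ _ _ _] at hm
                    omega
                · by_cases h1 : (t : ℕ) = 1
                  · rw [hXt1 t h1] at hm
                    simp only [Set.mem_union, Set.mem_image, Set.mem_setOf_eq,
                      Set.mem_insert_iff, Set.mem_singleton_iff] at hm
                    rcases hm with ⟨i', _, hi'⟩ | hm | hm
                    · exact absurd hi' (hdisj _ _)
                    · rw [humk _ _ _ _] at hm; omega
                    · rw [humk _ _ _ _] at hm; omega
                  · rw [hXt2 t (by omega)] at hm
                    simp only [Set.mem_insert_iff, Set.mem_singleton_iff] at hm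
                    rcases hm with hm | hm | hm <;> rw [humk _ _ _ _] at hm <;> omega
              · intro hm
                rw [hXt2 t (by omega)]
                by_cases h1 : (t : ℕ) = jv + 2
                · exact Or.inl ((humk _ _ _ _).mpr (by omega)).symm
                · exact Or.inr (Or.inl ((humk _ _ _ _).mpr (by omega)).symm)
            rw [hset]
            exact interval_conn (ℓ+1) (jv + 1) (jv + 2) (by omega) (by omega)
    · -- sizes
      intro t
      by_cases h0 : (t : ℕ) = 0
      · rw [hXt0 t h0]
        calc (Set.range v ∪ {u ⟨0, hl0⟩}).ncard
            ≤ (Set.range v).ncard + ({u ⟨0, hl0⟩} : Set V).ncard := Set.ncard_union_le _ _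
          _ = c + 1 := by rw [hrange_v, Set.ncard_singleton]
          _ ≤ max (c + 1) 3 := le_max_left _ _
      · by_cases h1 : (t : ℕ) = 1
        · rw [hXt1 t h1]
          have hzero : (⟨0, by omega⟩ : Fin c) ∈ (Set.univ : Set (Fin c)) := trivial
          have hsub : {i : Fin c | (i : ℕ) % 2 = 1} ⊆ Set.univ \ {(⟨0, by omega⟩ : Fin c)} := by
            intro i hi
            refine ⟨trivial, ?_⟩
            simp only [Set.mem_singleton_iff]
            intro h
            rw [h] at hi
            simp at hi
          have hcard1 : {i : Fin c | (i : ℕ) % 2 = 1}.ncard ≤ c - 1 := by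
            calc {i : Fin c | (i : ℕ) % 2 = 1}.ncard
                ≤ (Set.univ \ {(⟨0, by omega⟩ : Fin c)}).ncard :=
                  Set.ncard_le_ncard hsub (Set.toFinite _)
              _ = c - 1 := by
                  rw [Set.ncard_diff_singleton_of_mem hzero, Set.ncard_univ,
                    Nat.card_eq_fintype_card, Fintype.card_fin]
          calc ((v '' {i : Fin c | (i : ℕ) % 2 = 1}) ∪ {u ⟨0, hl0⟩, u ⟨ℓ - 1, hl1⟩}).ncard
              ≤ (v '' {i : Fin c | (i : ℕ) % 2 = 1}).ncard
                + ({u ⟨0, hl0⟩, u ⟨ℓ - 1, hl1⟩} : Set V).ncard := Set.ncard_union_le _ _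
            _ ≤ (c - 1) + 2 := by
                refine Nat.add_le_add ?_ ?_
                · rw [Set.ncard_image_of_injective _ hvinj]; exact hcard1
                · calc ({u ⟨0, hl0⟩, u ⟨ℓ - 1, hl1⟩} : Set V).ncard
                      ≤ ({u ⟨ℓ - 1, hl1⟩} : Set V).ncard + 1 := Set.ncard_insert_le _ _
                    _ = 2 := by rw [Set.ncard_singleton]
            _ ≤ max (c + 1) 3 := by omega
        · rw [hXt2 t (by omega)]
          calc ({u ⟨min ((t : ℕ) - 2) (ℓ - 1), hmin2 t⟩, u ⟨min ((t : ℕ) - 1) (ℓ - 1), hmin1 t⟩,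
                u ⟨ℓ - 1, hl1⟩} : Set V).ncard
              ≤ ({u ⟨min ((t : ℕ) - 1) (ℓ - 1), hmin1 t⟩, u ⟨ℓ - 1, hl1⟩} : Set V).ncard + 1 :=
                Set.ncard_insert_le _ _
            _ ≤ (({u ⟨ℓ - 1, hl1⟩} : Set V).ncard + 1) + 1 :=
                Nat.add_le_add_right (Set.ncard_insert_le _ _) 1
            _ = 3 := by rw [Set.ncard_singleton]
            _ ≤ max (c + 1) 3 := le_max_right _ _
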